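/- Let G be a finite group with trivial Frattini subgroup. Then the centralizer of the socle of G is contained in the socle: C_G(Soc(G)) ≤ Soc(G). -/

import Mathlib

open Subgroup Pointwise

/-- `H` is a normal subgroup of `K` (both viewed as subgroups of the ambient group `G`). -/
def NormalIn {G : Type*} [Group G] (H K : Subgroup G) : Prop :=
  H ≤ K ∧ ∀ k ∈ K, ∀ h ∈ H, k * h * k⁻¹ ∈ H

/-- `H` is subnormal in `K`: there is a chain `H = c 0 ⊴ c 1 ⊴ ... ⊴ c n = K`. -/
def SubnormalIn {G : Type*} [Group G] (H K : Subgroup G) : Prop :=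
  ∃ (n : ℕ) (c : ℕ → Subgroup G), c 0 = H ∧ c n = K ∧ ∀ i < n, NormalIn (c i) (c (i + 1))

/-- The hypercenter: the limit of the upper central series. -/
def hypercenter (G : Type*) [Group G] : Subgroup G := ⨆ n, _root_.upperCentralSeries G n

/-- The nilpotent residual: the intersection of all normal subgroups with nilpotent quotient. -/
def nilpotentResidual (G : Type*) [Group G] : Subgroup G :=
  ⨅ N ∈ {N : Subgroup G |
    ∃ h : N.Normal, @Group.IsNilpotent (G ⧸ N) (@QuotientGroup.Quotient.group G _ N h)}, N

/-- The Fitting subgroup: the join of all normal nilpotent subgroups. -/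
def fitting (G : Type*) [Group G] : Subgroup G :=
  ⨆ N ∈ {N : Subgroup G | N.Normal ∧ Group.IsNilpotent N}, N

/-- `N` is a minimal normal subgroup. -/
def IsMinimalNormal {G : Type*} [Group G] (N : Subgroup G) : Prop :=
  N.Normal ∧ N ≠ ⊥ ∧ ∀ K : Subgroup G, K.Normal → K ≤ N → K = ⊥ ∨ K = N

/-- The socle: the join of all minimal normal subgroups. -/
def socle (G : Type*) [Group G] : Subgroup G :=
  ⨆ N ∈ {N : Subgroup G | IsMinimalNormal N}, N

/-- A group is supersolvable if it has a chain of normal subgroups with cyclic factors. -/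
def IsSupersolvable (G : Type*) [Group G] : Prop :=
  ∃ (n : ℕ) (c : ℕ → Subgroup G), c 0 = ⊥ ∧ c n = ⊤ ∧ (∀ i, (c i).Normal) ∧
    ∀ i < n, c i ≤ c (i + 1) ∧ ∃ g : G, c (i + 1) = c i ⊔ Subgroup.zpowers g

/-- A subgroup `H` is pronormal if `H` and each conjugate `H^g` are conjugate in their join. -/
def Pronormal {G : Type*} [Group G] (H : Subgroup G) : Prop :=
  ∀ g : G, ∃ x ∈ H ⊔ H.map (MulAut.conj g).toMonoidHom,
    H.map (MulAut.conj g).toMonoidHom = H.map (MulAut.conj x).toMonoidHom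

/-- A subgroup `H` is abnormal if `g ∈ ⟨H, H^g⟩` for all `g`. -/
def Abnormal {G : Type*} [Group G] (H : Subgroup G) : Prop :=
  ∀ g : G, g ∈ H ⊔ H.map (MulAut.conj g).toMonoidHom

/-- `Δ(G)`: the intersection of all abnormal maximal subgroups. -/
def abnormalDelta (G : Type*) [Group G] : Subgroup G :=
  ⨅ M ∈ {M : Subgroup G | IsCoatom M ∧ Abnormal M}, M

/-- The generalized Fitting subgroup `F̃(G)`: the preimage of `Soc(G/Φ(G))` in `G`. -/
def genFitting (G : Type*) [Group G] : Subgroup G :=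
  (socle (G ⧸ frattini G)).comap (QuotientGroup.mk' (frattini G))

/-- A group is `p`-decomposable if every `p`-element commutes with every `p'`-element. -/
def IsPDecomposable (p : ℕ) (K : Type*) [Group K] : Prop :=
  ∀ a b : K, (∃ n, orderOf a = p ^ n) → Nat.Coprime (orderOf b) p → Commute a b

open scoped commutatorElement

section AuxLemmas

open Subgroup

private lemma aux_commutator_inf_center_le_frattini (G : Type*) [Group G] :
    ⁅(⊤ : Subgroup G), ⊤⁆ ⊓ Subgroup.center G ≤ frattini G := by
  intro x hx
  obtain ⟨hxc, hxz⟩ := hx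
  rw [frattini, Order.radical]
  simp only [Subgroup.mem_iInf]
  intro M hM
  by_contra hxM
  have hlt : M < M ⊔ Subgroup.zpowers x :=
    left_lt_sup.mpr (by simpa [Subgroup.zpowers_le] using hxM)
  have htop : M ⊔ Subgroup.zpowers x = ⊤ := hM.2 _ hlt
  haveI hzn : (Subgroup.zpowers x).Normal := by
    constructor
    intro n hn g
    obtain ⟨k, rfl⟩ := hn
    have hc : Commute g x := Subgroup.mem_center_iff.mp hxz g
    have hk : g * x ^ k = x ^ k * g := (hc.zpow_right k).eq
    exact ⟨k, by show x ^ k = g * x ^ k * g⁻¹; rw [hk, mul_inv_cancel_right]⟩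
  haveI hMn : M.Normal := by
    constructor
    intro m hm g
    have hg : g ∈ (↑(M ⊔ Subgroup.zpowers x) : Set G) := htop ▸ Set.mem_univ g
    rw [Subgroup.mul_normal] at hg
    obtain ⟨a, ha, b, hb, rfl⟩ := hg
    obtain ⟨k, rfl⟩ := hb
    have hxkz : x ^ k ∈ Subgroup.center G := (Subgroup.center G).zpow_mem hxz k
    have h1 : x ^ k * m * (x ^ k)⁻¹ = m := by
      rw [← Subgroup.mem_center_iff.mp hxkz m, mul_inv_cancel_right]
    have h2 : a * x ^ k * m * (a * x ^ k)⁻¹ = a * m * a⁻¹ := by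
      rw [mul_inv_rev]
      calc a * x ^ k * m * ((x ^ k)⁻¹ * a⁻¹) = a * (x ^ k * m * (x ^ k)⁻¹) * a⁻¹ := by
            group
        _ = a * m * a⁻¹ := by rw [h1]
    rw [h2]
    exact M.mul_mem (M.mul_mem ha hm) (M.inv_mem ha)
  set f := QuotientGroup.mk' M with hf
  have hxbar : Subgroup.zpowers (f x) = ⊤ := by
    have h2 : Subgroup.map f (M ⊔ Subgroup.zpowers x) = ⊤ := by
      rw [htop]
      exact Subgroup.map_top_of_surjective f (QuotientGroup.mk'_surjective M)
    rw [Subgroup.map_sup] at h2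
    have h3 : Subgroup.map f M = ⊥ :=
      (Subgroup.map_eq_bot_iff M).mpr (le_of_eq (QuotientGroup.ker_mk' M).symm)
    rw [h3, bot_sup_eq, MonoidHom.map_zpowers] at h2
    exact h2
  have hcomm : ∀ u v : G ⧸ M, u * v = v * u := by
    intro u v
    have hu : u ∈ Subgroup.zpowers (f x) := hxbar ▸ Subgroup.mem_top u
    have hv : v ∈ Subgroup.zpowers (f x) := hxbar ▸ Subgroup.mem_top v
    obtain ⟨j, rfl⟩ := hu
    obtain ⟨l, rfl⟩ := hv
    exact ((Commute.refl (f x)).zpow_zpow j l).eq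
  have hcM : ⁅(⊤ : Subgroup G), ⊤⁆ ≤ M := by
    rw [Subgroup.commutator_le]
    intro a _ b _
    have h4 : f ⁅a, b⁆ = 1 := by
      rw [map_commutatorElement, commutatorElement_eq_one_iff_mul_comm]
      exact hcomm _ _
    exact (QuotientGroup.eq_one_iff _).mp h4
  exact hxM (hcM hxc)

private lemma aux_frattini_map_le {G : Type*} [Group G] [Finite G] (H : Subgroup G)
    (hH : H.Normal) : (frattini ↥H).map H.subtype ≤ frattini G := by
  haveI := hH
  haveI hchar : ((frattini ↥H).map H.subtype).Normal :=
    ConjAct.normal_of_characteristic_of_normal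
  conv_rhs => rw [frattini, Order.radical]
  refine le_iInf₂ fun M hM => ?_
  by_contra hle
  have hsup : M ⊔ (frattini ↥H).map H.subtype = ⊤ := hM.2 _ (left_lt_sup.mpr hle)
  have hgen : M.comap H.subtype ⊔ frattini ↥H = ⊤ := by
    rw [eq_top_iff]
    intro y _
    have hy : (y : G) ∈ (↑(M ⊔ (frattini ↥H).map H.subtype) : Set G) := by
      rw [hsup]; trivial
    rw [Subgroup.mul_normal] at hy
    obtain ⟨m, hm, z, hz, hmz⟩ := hy
    obtain ⟨z', hz', rfl⟩ := hz
    have hmH : m ∈ H := by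
      have h6 : m = (y : G) * ((z' : G))⁻¹ := eq_mul_inv_of_mul_eq hmz
      rw [h6]; exact H.mul_mem y.2 (H.inv_mem z'.2)
    have hy' : y = (⟨m, hmH⟩ : ↥H) * z' := by
      apply Subtype.ext; exact hmz.symm
    rw [hy']
    exact Subgroup.mul_mem _
      (Subgroup.mem_sup_left (by exact hm : (⟨m, hmH⟩ : ↥H) ∈ M.comap H.subtype))
      (Subgroup.mem_sup_right hz')
  have htop : M.comap H.subtype = ⊤ := frattini_nongenerating hgen
  have hHM : H ≤ M := by
    intro h hh
    have h7 : (⟨h, hh⟩ : ↥H) ∈ M.comap H.subtype := htop ▸ Subgroup.mem_top _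
    exact h7
  exact hle (le_trans (Subgroup.map_subtype_le _) hHM)

private lemma aux_frattini_eq_bot {G : Type*} [Group G] [Finite G] {H : Subgroup G}
    (hH : H.Normal) (hG : frattini G = ⊥) : frattini ↥H = ⊥ := by
  have h := aux_frattini_map_le H hH
  rw [hG, le_bot_iff, Subgroup.map_eq_bot_iff] at h
  rw [Subgroup.ker_subtype, le_bot_iff] at h
  exact h

private lemma aux_exists_min_mem {G : Type*} [Group G] [Finite G] (s : Set (Subgroup G))
    (hs : s.Nonempty) : ∃ N ∈ s, ∀ K ∈ s, K ≤ N → K = N := by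
  haveI : Finite (Subgroup G) := Finite.of_injective (fun H => (H : Set G)) SetLike.coe_injective
  obtain ⟨N, hN, hmin⟩ := (Set.toFinite s).exists_minimal hs
  exact ⟨N, hN, fun K hK hKN => le_antisymm hKN (hmin hK hKN)⟩

private lemma aux_comm_elt {G : Type*} [Group G] (z a b : G) (ha : Commute z a)
    (hb : Commute z b) : ⁅z * a, b⁆ = ⁅a, b⁆ := by
  have hz : Commute z (a * b * a⁻¹) := (ha.mul_right hb).mul_right ha.inv_right
  have key : z * (a * b * a⁻¹) * z⁻¹ = a * b * a⁻¹ := by rw [hz.eq]; group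
  calc ⁅z * a, b⁆ = z * (a * b * a⁻¹) * z⁻¹ * b⁻¹ := by
        rw [commutatorElement_def]; group
    _ = a * b * a⁻¹ * b⁻¹ := by rw [key]
    _ = ⁅a, b⁆ := by rw [commutatorElement_def]

private lemma aux_le_socle {G : Type*} [Group G] {N : Subgroup G} (hN : IsMinimalNormal N) :
    N ≤ socle G :=
  le_iSup₂ (f := fun (N : Subgroup G) (_ : N ∈ {N : Subgroup G | IsMinimalNormal N}) => N) N hN

private lemma aux_socle_normal (G : Type*) [Group G] : (socle G).Normal := by
  constructor
  intro x hx g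
  have key : socle G ≤ Subgroup.comap (MulAut.conj g).toMonoidHom (socle G) := by
    refine iSup₂_le fun N hN => ?_
    intro n hn
    have h8 : g * n * g⁻¹ ∈ N := hN.1.conj_mem n hn g
    exact aux_le_socle hN h8
  exact key hx

private lemma aux_exists_minNormal_le {G : Type*} [Group G] [Finite G] {H : Subgroup G}
    (hH : H.Normal) (hne : H ≠ ⊥) : ∃ N, IsMinimalNormal N ∧ N ≤ H := by
  obtain ⟨N, ⟨hNn, hNne, hNH⟩, hmin⟩ :=
    aux_exists_min_mem {K : Subgroup G | K.Normal ∧ K ≠ ⊥ ∧ K ≤ H} ⟨H, hH, hne, le_rfl⟩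
  refine ⟨N, ⟨hNn, hNne, ?_⟩, hNH⟩
  intro K hKn hKN
  rcases eq_or_ne K ⊥ with h | h
  · exact Or.inl h
  · exact Or.inr (hmin K ⟨hKn, h, hKN.trans hNH⟩ hKN)

private lemma aux_abelian_normal_le_socle {G : Type*} [Group G] [Finite G]
    (hΦ : frattini G = ⊥) :
    ∀ n, ∀ A : Subgroup G, Nat.card ↥A ≤ n → A.Normal →
      (∀ a ∈ A, ∀ b ∈ A, a * b = b * a) → A ≤ socle G := by
  intro n
  induction n with
  | zero =>
    intro A hcard
    have : 0 < Nat.card ↥A := Nat.card_pos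
    omega
  | succ n ih =>
    intro A hcard hAnorm hAcomm
    rcases eq_or_ne A ⊥ with rfl | hA
    · exact bot_le
    obtain ⟨N, hNmin, hNA⟩ := aux_exists_minNormal_le hAnorm hA
    have hNs : N ≤ socle G := aux_le_socle hNmin
    have hex : ∃ M : Subgroup G, IsCoatom M ∧ ¬N ≤ M := by
      by_contra h
      push_neg at h
      have h9 : N ≤ frattini G := by
        rw [frattini, Order.radical]
        exact le_iInf₂ h
      rw [hΦ, le_bot_iff] at h9
      exact hNmin.2.1 h9
    obtain ⟨M, hM, hNM⟩ := hex
    have hMN : M ⊔ N = ⊤ := hM.2 _ (left_lt_sup.mpr hNM)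
    haveI hNnorm : N.Normal := hNmin.1
    set B := A ⊓ M with hB
    have hBnorm : B.Normal := by
      constructor
      intro x hx g
      have hg : g ∈ (↑(M ⊔ N) : Set G) := by rw [hMN]; trivial
      rw [Subgroup.mul_normal] at hg
      obtain ⟨m, hm, v, hv, rfl⟩ := hg
      have hxA : x ∈ A := hx.1
      have h1 : v * x * v⁻¹ = x := by
        rw [hAcomm v (hNA hv) x hxA, mul_inv_cancel_right]
      have h2 : m * v * x * (m * v)⁻¹ = m * x * m⁻¹ := by
        rw [mul_inv_rev]
        calc m * v * x * (v⁻¹ * m⁻¹) = m * (v * x * v⁻¹) * m⁻¹ := by group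
          _ = m * x * m⁻¹ := by rw [h1]
      rw [h2]
      exact ⟨hAnorm.conj_mem x hxA m, M.mul_mem (M.mul_mem hm hx.2) (M.inv_mem hm)⟩
    have hBA : B < A := by
      refine lt_of_le_of_ne inf_le_left fun h => ?_
      exact hNM (hNA.trans (h ▸ inf_le_right : A ≤ M))
    have hcardB : Nat.card ↥B ≤ n := by
      have h1 : (B : Set G) ⊂ (A : Set G) := by
        rw [Set.ssubset_iff_of_subset (SetLike.coe_subset_coe.mpr hBA.le)]
        obtain ⟨a, haA, haB⟩ := SetLike.exists_of_lt hBA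
        exact ⟨a, haA, haB⟩
      have h2 : Nat.card (↑B : Set G) < Nat.card (↑A : Set G) := by
        rw [Nat.card_coe_set_eq, Nat.card_coe_set_eq]
        exact Set.ncard_lt_ncard h1 (Set.toFinite _)
      have h3 : Nat.card ↥B < Nat.card ↥A := h2
      omega
    have hBsoc : B ≤ socle G :=
      ih B hcardB hBnorm fun a ha b hb => hAcomm a ha.1 b hb.1
    intro a ha
    have haT : a ∈ (↑(M ⊔ N) : Set G) := by rw [hMN]; trivial
    rw [Subgroup.mul_normal] at haT
    obtain ⟨m, hm, v, hv, hmv⟩ := haT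
    have hmA : m ∈ A := by
      have h4 : m = a * v⁻¹ := eq_mul_inv_of_mul_eq hmv
      rw [h4]
      exact A.mul_mem ha (A.inv_mem (hNA hv))
    have h5 : a = m * v := hmv.symm
    rw [h5]
    exact (socle G).mul_mem (hBsoc ⟨hmA, hm⟩) (hNs hv)

private lemma aux_centralizer_normal {G : Type*} [Group G] {H : Subgroup G} (hH : H.Normal) :
    (Subgroup.centralizer (H : Set G)).Normal := by
  constructor
  intro z hz g
  rw [Subgroup.mem_centralizer_iff] at hz ⊢
  intro h hh
  have hh' : g⁻¹ * h * g ∈ H := by simpa using hH.conj_mem h hh g⁻¹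
  have e := hz _ hh'
  calc h * (g * z * g⁻¹) = g * ((g⁻¹ * h * g) * z) * g⁻¹ := by group
    _ = g * (z * (g⁻¹ * h * g)) * g⁻¹ := by rw [e]
    _ = (g * z * g⁻¹) * h := by group

end AuxLemmas

theorem centralizer_socle_le_socle_of_frattini_eq_bot {G : Type*} [Group G] [Finite G]
    (hΦ : frattini G = ⊥) :
    Subgroup.centralizer (socle G : Set G) ≤ socle G := by
  set S := socle G with hS
  haveI hSnorm : S.Normal := aux_socle_normal G
  set C := Subgroup.centralizer (S : Set G) with hC
  by_contra hCS
  haveI hCnorm : C.Normal := aux_centralizer_normal hSnorm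
  haveI hCCnorm : (Subgroup.centralizer (C : Set G)).Normal := aux_centralizer_normal hCnorm
  set ZC := C ⊓ Subgroup.centralizer (C : Set G) with hZC
  haveI hZCnorm : ZC.Normal := by
    constructor
    intro x hx g
    exact ⟨hCnorm.conj_mem x hx.1 g, hCCnorm.conj_mem x hx.2 g⟩
  -- elements of ZC commute with everything in C
  have hzw : ∀ z ∈ ZC, ∀ w ∈ C, Commute z w := fun z hz w hw =>
    (Subgroup.mem_centralizer_iff.mp hz.2 w hw).symm
  have hZCab : ∀ a ∈ ZC, ∀ b ∈ ZC, a * b = b * a := fun a ha b hb =>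
    (hzw a ha b hb.1).eq
  have hZCS : ZC ≤ S :=
    aux_abelian_normal_le_socle hΦ (Nat.card ↥ZC) ZC le_rfl hZCnorm hZCab
  have hCSZC : ∀ x, x ∈ C → x ∈ S → x ∈ ZC := fun x hxC hxS =>
    ⟨hxC, Subgroup.mem_centralizer_iff.mpr fun c hc =>
      (Subgroup.mem_centralizer_iff.mp hc x hxS).symm⟩
  have hZCC : ZC < C := lt_of_le_of_ne inf_le_left fun h => hCS (h ▸ hZCS)
  obtain ⟨N, ⟨hNnorm, hNgt, hNC⟩, hNmin⟩ :=
    aux_exists_min_mem {K : Subgroup G | K.Normal ∧ ZC < K ∧ K ≤ C} ⟨C, hCnorm, hZCC, le_rfl⟩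
  haveI := hNnorm
  set K := ⁅N, N⁆ with hK
  haveI hKnorm : K.Normal := Subgroup.commutator_normal N N
  have hKN : K ≤ N := Subgroup.commutator_le_left N N
  have hWN : ZC ⊔ K ≤ N := sup_le hNgt.le hKN
  haveI hWnorm : (ZC ⊔ K).Normal := Subgroup.sup_normal ZC K
  by_cases hcase : ZC < ZC ⊔ K
  · -- the perfect case
    have hWeq : ZC ⊔ K = N := hNmin (ZC ⊔ K) ⟨hWnorm, hcase, hWN.trans hNC⟩ hWN
    have hKC : K ≤ C := hKN.trans hNC
    have hKK : ⁅K, K⁆ = K := by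
      refine le_antisymm (Subgroup.commutator_le_left K K) ?_
      show ⁅N, N⁆ ≤ ⁅K, K⁆
      rw [Subgroup.commutator_le]
      intro a ha b hb
      have haW : a ∈ (↑(ZC ⊔ K) : Set G) := by rw [hWeq]; exact ha
      have hbW : b ∈ (↑(ZC ⊔ K) : Set G) := by rw [hWeq]; exact hb
      rw [Subgroup.mul_normal] at haW hbW
      obtain ⟨z₁, hz₁, k₁, hk₁, rfl⟩ := haW
      obtain ⟨z₂, hz₂, k₂, hk₂, rfl⟩ := hbW
      have hk₁C : k₁ ∈ C := hKC hk₁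
      have hk₂C : k₂ ∈ C := hKC hk₂
      have hz₂C : z₂ ∈ C := hz₂.1
      have e1 : ⁅z₁ * k₁, z₂ * k₂⁆ = ⁅k₁, z₂ * k₂⁆ :=
        aux_comm_elt z₁ k₁ (z₂ * k₂) (hzw z₁ hz₁ k₁ hk₁C)
          (hzw z₁ hz₁ _ (C.mul_mem hz₂C hk₂C))
      have e2 : ⁅z₂ * k₂, k₁⁆ = ⁅k₂, k₁⁆ :=
        aux_comm_elt z₂ k₂ k₁ (hzw z₂ hz₂ k₂ hk₂C) (hzw z₂ hz₂ k₁ hk₁C)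
      have e3 : ⁅k₁, z₂ * k₂⁆ = ⁅k₁, k₂⁆ := by
        rw [← commutatorElement_inv, e2, commutatorElement_inv]
      rw [e1, e3]
      exact Subgroup.commutator_mem_commutator hk₁ hk₂
    have hKbot : K ≠ ⊥ := by
      intro h
      rw [h, sup_bot_eq] at hWeq
      exact hNgt.ne hWeq
    have hfK : frattini ↥K = ⊥ := aux_frattini_eq_bot hKnorm hΦ
    have hmapK : Subgroup.map K.subtype ⁅(⊤ : Subgroup ↥K), ⊤⁆ = Subgroup.map K.subtype ⊤ := by
      rw [Subgroup.map_commutator]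
      have htopK : Subgroup.map K.subtype ⊤ = K := by
        rw [← MonoidHom.range_eq_map, Subgroup.range_subtype]
      rw [htopK, hKK]
    have hcomTop : ⁅(⊤ : Subgroup ↥K), ⊤⁆ = ⊤ :=
      Subgroup.map_injective K.subtype_injective hmapK
    have hcenterK : Subgroup.center ↥K = ⊥ := by
      have h5 := aux_commutator_inf_center_le_frattini ↥K
      rw [hcomTop, top_inf_eq, hfK, le_bot_iff] at h5
      exact h5
    obtain ⟨P, hPmin, hPK⟩ := aux_exists_minNormal_le hKnorm hKbot
    have hPS : P ≤ S := aux_le_socle hPmin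
    have hPC : P ≤ C := hPK.trans hKC
    have hPbot : P = ⊥ := by
      rw [eq_bot_iff]
      intro p hp
      have hpK : p ∈ K := hPK hp
      have hpZC : p ∈ ZC := hCSZC p (hPC hp) (hPS hp)
      have hpc : (⟨p, hpK⟩ : ↥K) ∈ Subgroup.center ↥K := by
        rw [Subgroup.mem_center_iff]
        intro y
        apply Subtype.ext
        show (y : G) * p = p * (y : G)
        exact (hzw p hpZC (y : G) (hKC y.2)).symm.eq
      rw [hcenterK] at hpc
      have hp1 : (⟨p, hpK⟩ : ↥K) = 1 := Subgroup.mem_bot.mp hpc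
      exact Subgroup.mem_bot.mpr (congrArg Subtype.val hp1)
    exact hPmin.2.1 hPbot
  · -- the abelian case
    have hWZC : ZC ⊔ K = ZC := by
      by_contra hne
      exact hcase (lt_of_le_of_ne le_sup_left fun h => hne h.symm)
    have hKZC : K ≤ ZC := le_sup_right.trans hWZC.le
    have hfN : frattini ↥N = ⊥ := aux_frattini_eq_bot hNnorm hΦ
    have hmapN : Subgroup.map N.subtype ⁅(⊤ : Subgroup ↥N), ⊤⁆ = ⁅N, N⁆ := by
      rw [Subgroup.map_commutator, ← MonoidHom.range_eq_map, Subgroup.range_subtype]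
    have hcomm_center : ⁅(⊤ : Subgroup ↥N), ⊤⁆ ≤ Subgroup.center ↥N := by
      intro c hc
      have hcK : (c : G) ∈ K := by
        rw [hK, ← hmapN]
        exact Subgroup.mem_map_of_mem _ hc
      have hczc : (c : G) ∈ ZC := hKZC hcK
      rw [Subgroup.mem_center_iff]
      intro y
      apply Subtype.ext
      show (y : G) * c = (c : G) * y
      exact (hzw (c : G) hczc (y : G) (hNC y.2)).symm.eq
    have hcomm_bot : ⁅(⊤ : Subgroup ↥N), (⊤ : Subgroup ↥N)⁆ = (⊥ : Subgroup ↥N) := by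
      have h5 := aux_commutator_inf_center_le_frattini ↥N
      rw [hfN] at h5
      have h6 : ⁅(⊤ : Subgroup ↥N), ⊤⁆ ≤ (⊥ : Subgroup ↥N) :=
        le_trans (le_inf le_rfl hcomm_center) h5
      exact le_bot_iff.mp h6
    have hNab : ∀ a ∈ N, ∀ b ∈ N, a * b = b * a := by
      intro a ha b hb
      have hmem : ⁅(⟨a, ha⟩ : ↥N), (⟨b, hb⟩ : ↥N)⁆ ∈ ⁅(⊤ : Subgroup ↥N), (⊤ : Subgroup ↥N)⁆ :=
        Subgroup.commutator_mem_commutator (Subgroup.mem_top _) (Subgroup.mem_top _)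
      rw [hcomm_bot] at hmem
      have h1 := commutatorElement_eq_one_iff_mul_comm.mp (Subgroup.mem_bot.mp hmem)
      exact congrArg Subtype.val h1
    have hNS : N ≤ S :=
      aux_abelian_normal_le_socle hΦ (Nat.card ↥N) N le_rfl hNnorm hNab
    have hNZC : N ≤ ZC := fun x hx => hCSZC x (hNC hx) (hNS hx)
    exact hNgt.not_ge hNZC
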